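/- Let a = (a1, a2) be a unit vector in R^2 with a1 > a2 > 0 and let t satisfy 0 ≤ t ≤ a1 - a2. Then the 2-dimensional Lebesgue measure of the slab {x ∈ [-1/2,1/2]^2 : |a1*x1 + a2*x2| ≤ t/2} equals t/a1. -/

import Mathlib

open MeasureTheory

theorem slab_square_chamber1_volume
    (a1 a2 t : ℝ) (hunit : a1 ^ 2 + a2 ^ 2 = 1) (h12 : a1 > a2) (h2 : a2 > 0)
    (ht0 : 0 ≤ t) (ht1 : t ≤ a1 - a2) :
    volume {x : EuclideanSpace ℝ (Fin 2) |
        (∀ i, |x i| ≤ 1 / 2) ∧ |a1 * x 0 + a2 * x 1| ≤ t / 2}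
      = ENNReal.ofReal (t / a1) := by
  have ha1 : 0 < a1 := h2.trans h12
  -- Transfer to the pi type
  set S : Set (Fin 2 → ℝ) :=
    {x | (∀ i, |x i| ≤ 1 / 2) ∧ |a1 * x 0 + a2 * x 1| ≤ t / 2} with hS
  have hSmeas : MeasurableSet S := by
    have : S = (⋂ i, {x : Fin 2 → ℝ | |x i| ≤ 1 / 2}) ∩
        {x : Fin 2 → ℝ | |a1 * x 0 + a2 * x 1| ≤ t / 2} := by
      ext x; simp [hS, Set.mem_iInter, and_comm]
    rw [this]
    refine (MeasurableSet.iInter fun i => ?_).inter ?_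
    · exact measurableSet_le ((measurable_pi_apply i).abs) measurable_const
    · exact measurableSet_le
        (by fun_prop) measurable_const
  have step1 :
      volume {x : EuclideanSpace ℝ (Fin 2) |
        (∀ i, |x i| ≤ 1 / 2) ∧ |a1 * x 0 + a2 * x 1| ≤ t / 2} = volume S := by
    rw [← (EuclideanSpace.volume_preserving_symm_measurableEquiv_toLp (Fin 2)).measure_preimage
      hSmeas.nullMeasurableSet]
    rfl
  rw [step1]
  -- Transfer to ℝ × ℝ (swapped)
  set T : Set (ℝ × ℝ) :=
    {p | |p.2| ≤ 1 / 2 ∧ |p.1| ≤ 1 / 2 ∧ |a1 * p.2 + a2 * p.1| ≤ t / 2} with hT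
  have hTmeas : MeasurableSet T := by
    refine MeasurableSet.inter ?_ (MeasurableSet.inter ?_ ?_)
    · exact measurableSet_le measurable_snd.abs measurable_const
    · exact measurableSet_le measurable_fst.abs measurable_const
    · exact measurableSet_le
        ((measurable_snd.const_mul a1).add (measurable_fst.const_mul a2)).abs
        measurable_const
  have hswap : MeasurePreserving (Prod.swap : ℝ × ℝ → ℝ × ℝ) volume volume := by
    rw [Measure.volume_eq_prod]; exact Measure.measurePreserving_swap
  have step2 : volume S = volume T := by
    rw [← (((volume_preserving_finTwoArrow ℝ).symm _).comp
        hswap).measure_preimage hSmeas.nullMeasurableSet]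
    congr 1
    ext p
    simp only [hS, hT, Set.mem_preimage, Set.mem_setOf_eq, Function.comp_apply,
      Prod.swap_prod_mk, MeasurableEquiv.finTwoArrow_symm_apply,
      Matrix.cons_val_zero, Matrix.cons_val_one, Matrix.head_cons, Fin.forall_fin_two]
    tauto
  rw [step2]
  -- Slice
  have hslice : ∀ y : ℝ, {x : ℝ | (y, x) ∈ T} =
      if y ∈ Set.Icc (-(1:ℝ)/2) (1/2) then
        Set.Icc ((-(t/2) - a2 * y) / a1) ((t/2 - a2 * y) / a1) else ∅ := by
    intro y
    by_cases hy : y ∈ Set.Icc (-(1:ℝ)/2) (1/2)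
    · rw [if_pos hy]
      obtain ⟨hy1, hy2⟩ := hy
      ext x
      simp only [hT, Set.mem_setOf_eq, Set.mem_Icc, abs_le]
      constructor
      · rintro ⟨⟨hx1, hx2⟩, _, hs1, hs2⟩
        constructor
        · rw [div_le_iff₀ ha1]; linarith
        · rw [le_div_iff₀ ha1]; linarith
      · rintro ⟨hl, hr⟩
        rw [div_le_iff₀ ha1] at hl
        rw [le_div_iff₀ ha1] at hr
        refine ⟨⟨?_, ?_⟩, ⟨by linarith, hy2⟩, by linarith, by linarith⟩
        · nlinarith
        · nlinarith
    · rw [if_neg hy]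
      ext x
      simp only [hT, Set.mem_setOf_eq, Set.mem_empty_iff_false, iff_false]
      rintro ⟨-, hya, -⟩
      rw [abs_le] at hya
      exact hy ⟨by linarith [hya.1], hya.2⟩
  rw [Measure.volume_eq_prod, Measure.prod_apply hTmeas]
  have : ∀ y : ℝ, volume {x : ℝ | (y, x) ∈ T} =
      Set.indicator (Set.Icc (-(1:ℝ)/2) (1/2)) (fun _ => ENNReal.ofReal (t / a1)) y := by
    intro y
    rw [hslice y]
    by_cases hy : y ∈ Set.Icc (-(1:ℝ)/2) (1/2)
    · rw [if_pos hy, Set.indicator_of_mem hy, Real.volume_Icc]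
      congr 1
      field_simp
      ring
    · rw [if_neg hy, Set.indicator_of_notMem hy, measure_empty]
  calc ∫⁻ y, volume (Prod.mk y ⁻¹' T)
      = ∫⁻ y, Set.indicator (Set.Icc (-(1:ℝ)/2) (1/2))
          (fun _ => ENNReal.ofReal (t / a1)) y := by
        exact lintegral_congr this
    _ = ENNReal.ofReal (t / a1) * volume (Set.Icc (-(1:ℝ)/2) (1/2)) := by
        rw [lintegral_indicator measurableSet_Icc, setLIntegral_const]
    _ = ENNReal.ofReal (t / a1) := by
        rw [Real.volume_Icc]
        norm_num
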